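/- Define Δ(x, w) = ((1 − h(w))·w + h(w)·(1 − w)) − (8/5)·((1 − x)·w + x·(1 − w)). For every w with 7/20 ≤ w ≤ 63/100 one has Δ(0, w) = −(50/7)·w² + (383/70)·w − 5/4 ≤ −28311/140000 and Δ(1, w) = −(50/7)·w² + (607/70)·w − 57/20 ≤ −30551/140000. -/
import Mathlib

/-- The rounding function `h` of QuickCluster. -/
noncomputable def h (w : ℝ) : ℝ :=
  if w ≤ 7/20 then 0 else if w ≤ 63/100 then 25/7 * w - 5/4 else 1

/-- `Δ(x, w) = ((1 − h(w))·w + h(w)·(1 − w)) − (8/5)·((1 − x)·w + x·(1 − w))`. -/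
noncomputable def Δ (x w : ℝ) : ℝ :=
  ((1 - h w) * w + h w * (1 - w)) - (8/5) * ((1 - x) * w + x * (1 - w))

/-- For every `w ∈ [7/20, 63/100]`,
`Δ(0, w) = −(50/7)w² + (383/70)w − 5/4 ≤ −28311/140000` and
`Δ(1, w) = −(50/7)w² + (607/70)w − 57/20 ≤ −30551/140000`. -/
theorem delta_on_I2 (w : ℝ) (hw0 : 7/20 ≤ w) (hw1 : w ≤ 63/100) :
    (Δ 0 w = -(50/7) * w^2 + 383/70 * w - 5/4 ∧
      -(50/7) * w^2 + 383/70 * w - 5/4 ≤ -28311/140000) ∧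
    (Δ 1 w = -(50/7) * w^2 + 607/70 * w - 57/20 ∧
      -(50/7) * w^2 + 607/70 * w - 57/20 ≤ -30551/140000) := by
  have hh : h w = 25/7 * w - 5/4 := by
    unfold h
    split_ifs with h1
    · have : w = 7/20 := le_antisymm h1 hw0
      rw [this]; norm_num
    · rfl
  refine ⟨⟨by unfold Δ; rw [hh]; ring_nf, by nlinarith [sq_nonneg (w - 383/1000)]⟩,
    ⟨by unfold Δ; rw [hh]; ring_nf, by nlinarith [sq_nonneg (w - 607/1000)]⟩⟩
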